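/- The expected-value function of a monotone submodular function under independent activation is monotone submodular: if f: 2^N → ℝ≥0 is monotone submodular and each e ∈ N is active independently with probability p_e, then F(S) := Σ_{X⊆N} γ(X,N) f(X∩S) is monotone submodular, where γ(X,N) = Π_{e∈X} p_e Π_{e∈N∖X}(1−p_e). -/
import Mathlib


open Finset

/-- `γ X N = Π_{e∈X} p_e · Π_{e∈N∖X} (1−p_e)`. -/
def activeProb {α : Type*} [DecidableEq α] (p : α → ℝ) (X N : Finset α) : ℝ :=
  (∏ e ∈ X, p e) * ∏ e ∈ N \ X, (1 - p e)

/-- the expected-value function of a monotone submodular function under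
independent activation, `F(S) = Σ_{X⊆N} γ(X,N) f(X∩S)`, is monotone submodular. -/
theorem stmt_14 {α : Type*} [Fintype α] [DecidableEq α]
    (p : α → ℝ) (hp : ∀ e, 0 ≤ p e ∧ p e ≤ 1)
    (f : Finset α → ℝ)
    (hfnonneg : ∀ S, 0 ≤ f S)
    (hfmono : ∀ S₁ S₂ : Finset α, S₁ ⊆ S₂ → f S₁ ≤ f S₂)
    (hfsub : ∀ A B : Finset α, B ⊆ A → ∀ e ∉ A,
      f (insert e A) - f A ≤ f (insert e B) - f B)
    (F : Finset α → ℝ)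
    (hF : ∀ S : Finset α, F S = ∑ X ∈ (Finset.univ : Finset α).powerset,
      activeProb p X Finset.univ * f (X ∩ S)) :
    (∀ S₁ S₂ : Finset α, S₁ ⊆ S₂ → F S₁ ≤ F S₂) ∧
    (∀ A B : Finset α, B ⊆ A → ∀ e ∉ A,
      F (insert e A) - F A ≤ F (insert e B) - F B) := by
  have hγ : ∀ X : Finset α, 0 ≤ activeProb p X Finset.univ := by
    intro X
    unfold activeProb
    apply mul_nonneg
    · exact Finset.prod_nonneg fun e _ => (hp e).1
    · exact Finset.prod_nonneg fun e _ => by linarith [(hp e).2]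
  constructor
  · intro S₁ S₂ h
    rw [hF, hF]
    apply Finset.sum_le_sum
    intro X _
    exact mul_le_mul_of_nonneg_left
      (hfmono _ _ (Finset.inter_subset_inter Finset.Subset.rfl h)) (hγ X)
  · intro A B hBA e he
    rw [hF, hF, hF, hF, ← Finset.sum_sub_distrib, ← Finset.sum_sub_distrib]
    apply Finset.sum_le_sum
    intro X _
    rw [← mul_sub, ← mul_sub]
    apply mul_le_mul_of_nonneg_left _ (hγ X)
    by_cases hX : e ∈ X
    · rw [Finset.inter_insert_of_mem hX, Finset.inter_insert_of_mem hX]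
      apply hfsub
      · exact Finset.inter_subset_inter Finset.Subset.rfl hBA
      · simp [he]
    · rw [Finset.inter_insert_of_notMem hX, Finset.inter_insert_of_notMem hX]
      simp
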